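/- arXiv:1509.03805 — 4 statements merged into one kernel-verified Lean document; each statement's English description precedes it below -/
import Mathlib

section
/- Let 0 < ρ < 1 and set a = 2(1−ρ)/(2−ρ), b = 1/(2−ρ), and F(y) = (a + b|y|)·y/|y| for y ∈ ℝ³ \ {0}. Let E: ℝ³ \ {0} → ℂ³ be any vector field and define the push-forward field Ẽ(x) = (DF(y))^{-T}·E(y), where y = F⁻¹(x). Then for every x with |x| = 1 one has F⁻¹(x) = ρx and x × Ẽ(x) = ρ·(x × E(ρx)). -/
open Matrix

/-- The radial stretch map `F(y) = (a + b‖y‖)·y/‖y‖` on `ℝ³ \ {0}`. -/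
noncomputable def Frad (a b : ℝ) (y : EuclideanSpace ℝ (Fin 3)) : EuclideanSpace ℝ (Fin 3) :=
  ((a + b * ‖y‖) / ‖y‖) • y

/-- The Jacobian matrix of `F` at a point `y`, with entries `∂Fᵢ/∂yⱼ`. -/
noncomputable def JacFrad (a b : ℝ) (y : EuclideanSpace ℝ (Fin 3)) :
    Matrix (Fin 3) (Fin 3) ℝ :=
  Matrix.of fun i j => (fderiv ℝ (Frad a b) y) (EuclideanSpace.single j 1) i

lemma hasFDerivAt_norm_E3 (y : EuclideanSpace ℝ (Fin 3)) (hy : y ≠ 0) :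
    HasFDerivAt (fun z : EuclideanSpace ℝ (Fin 3) => ‖z‖) (‖y‖⁻¹ • innerSL ℝ y) y := by
  have hn : ‖y‖ ≠ 0 := norm_ne_zero_iff.mpr hy
  have h1 : HasFDerivAt (fun z : EuclideanSpace ℝ (Fin 3) => ‖z‖ ^ 2)
      (2 • innerSL ℝ y) y := (hasStrictFDerivAt_norm_sq y).hasFDerivAt
  have h2 : HasDerivAt Real.sqrt (1 / (2 * Real.sqrt (‖y‖^2))) (‖y‖^2) := by
    apply Real.hasDerivAt_sqrt; positivity
  have h3 := h2.comp_hasFDerivAt y h1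
  have he : (fun z : EuclideanSpace ℝ (Fin 3) => Real.sqrt (‖z‖^2)) = fun z => ‖z‖ := by
    funext z; rw [Real.sqrt_sq (norm_nonneg z)]
  rw [Function.comp_def, he] at h3
  refine h3.congr_fderiv ?_
  rw [Real.sqrt_sq (norm_nonneg y)]
  ext v
  simp
  field_simp

lemma hasFDerivAt_Frad (a b : ℝ) (y : EuclideanSpace ℝ (Fin 3)) (hy : y ≠ 0) :
    HasFDerivAt (Frad a b)
      ((a * ‖y‖⁻¹ + b) • ContinuousLinearMap.id ℝ (EuclideanSpace ℝ (Fin 3)) +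
        (a • ((-(‖y‖ ^ 2)⁻¹) • (‖y‖⁻¹ • innerSL ℝ y))).smulRight y) y := by
  have hn : ‖y‖ ≠ 0 := norm_ne_zero_iff.mpr hy
  have hinv := (hasDerivAt_inv hn).comp_hasFDerivAt y (hasFDerivAt_norm_E3 y hy)
  have h := (((hinv.const_mul a).add_const b).smul (hasFDerivAt_id y))
  have he : (fun z : EuclideanSpace ℝ (Fin 3) => (a * ‖z‖⁻¹ + b) • z) =ᶠ[nhds y] Frad a b := by
    filter_upwards [IsOpen.mem_nhds isOpen_compl_singleton hy] with z hz
    have hz' : ‖z‖ ≠ 0 := norm_ne_zero_iff.mpr hz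
    unfold Frad
    congr 1
    field_simp
  have h2 := h.congr_of_eventuallyEq he.symm
  exact h2

lemma jacFrad_at (ρ : ℝ) (hρ0 : 0 < ρ) (hρ1 : ρ < 1) (x : EuclideanSpace ℝ (Fin 3))
    (hx : ‖x‖ = 1) :
    JacFrad (2*(1-ρ)/(2-ρ)) (1/(2-ρ)) (ρ • x) =
      ρ⁻¹ • (1 : Matrix (Fin 3) (Fin 3) ℝ)
        - (2*(1-ρ)/(2-ρ)/ρ) • Matrix.of (fun i j => x i * x j) := by
  have hρ : ρ ≠ 0 := ne_of_gt hρ0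
  have h2ρ : 2 - ρ ≠ 0 := by linarith
  have hx0 : x ≠ 0 := by intro h; rw [h] at hx; simp at hx
  have hy : ρ • x ≠ 0 := smul_ne_zero hρ hx0
  have hny : ‖ρ • x‖ = ρ := by
    rw [norm_smul, hx, Real.norm_eq_abs, abs_of_pos hρ0, mul_one]
  have hF := hasFDerivAt_Frad (2*(1-ρ)/(2-ρ)) (1/(2-ρ)) (ρ • x) hy
  unfold JacFrad
  rw [hF.fderiv]
  ext i j
  simp [Matrix.one_apply, ContinuousLinearMap.smulRight_apply, hny,
    EuclideanSpace.single_apply, real_inner_smul_left, PiLp.smul_apply,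
    EuclideanSpace.inner_single_right]
  rcases eq_or_ne i j with h | h
  · subst h; simp; field_simp; ring
  · simp [h]; field_simp

lemma sum_sq_eq_one (x : EuclideanSpace ℝ (Fin 3)) (hx : ‖x‖ = 1) :
    x 0 ^ 2 + x 1 ^ 2 + x 2 ^ 2 = 1 := by
  have := EuclideanSpace.norm_eq x
  rw [hx] at this
  have h2 : (1:ℝ) ^ 2 = (Real.sqrt (∑ i, ‖x i‖ ^ 2)) ^ 2 := by rw [this]
  rw [Real.sq_sqrt (by positivity)] at h2
  simp [Fin.sum_univ_three, Real.norm_eq_abs, sq_abs] at h2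
  linarith

lemma MM (x : EuclideanSpace ℝ (Fin 3)) (hx : ‖x‖ = 1) :
    (Matrix.of (fun i j => x i * x j) : Matrix (Fin 3) (Fin 3) ℝ) *
      Matrix.of (fun i j => x i * x j) = Matrix.of (fun i j => x i * x j) := by
  have hS := sum_sq_eq_one x hx
  ext i j
  simp [Matrix.mul_apply, Fin.sum_univ_three]
  linear_combination (x i * x j) * hS

lemma key_inv (ρ : ℝ) (hρ0 : 0 < ρ) (hρ1 : ρ < 1) (x : EuclideanSpace ℝ (Fin 3))
    (hx : ‖x‖ = 1) :
    ((JacFrad (2*(1-ρ)/(2-ρ)) (1/(2-ρ)) (ρ • x)).transpose)⁻¹ =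
      ρ • (1 : Matrix (Fin 3) (Fin 3) ℝ)
        + (2 - 2*ρ) • Matrix.of (fun i j => x i * x j) := by
  have hρ : ρ ≠ 0 := ne_of_gt hρ0
  have h2ρ : 2 - ρ ≠ 0 := by linarith
  set M : Matrix (Fin 3) (Fin 3) ℝ := Matrix.of (fun i j => x i * x j) with hM
  have hMt : M.transpose = M := by ext i j; simp [hM, Matrix.transpose_apply, mul_comm]
  have hJ := jacFrad_at ρ hρ0 hρ1 x hx
  rw [hJ]
  have ht : (ρ⁻¹ • (1 : Matrix (Fin 3) (Fin 3) ℝ) - (2*(1-ρ)/(2-ρ)/ρ) • M).transpose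
      = ρ⁻¹ • (1 : Matrix (Fin 3) (Fin 3) ℝ) - (2*(1-ρ)/(2-ρ)/ρ) • M := by
    rw [Matrix.transpose_sub, Matrix.transpose_smul, Matrix.transpose_smul,
      Matrix.transpose_one, hMt]
  rw [ht]
  apply Matrix.inv_eq_right_inv
  have hMM : M * M = M := MM x hx
  rw [sub_mul, mul_add, mul_add]
  simp only [Matrix.smul_mul, Matrix.mul_smul, Matrix.one_mul, Matrix.mul_one, smul_smul, hMM]
  rw [mul_inv_cancel₀ hρ, one_smul, ← add_smul, add_sub_assoc, ← sub_smul]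
  have e2 : (2 - 2*ρ) * ρ⁻¹ - (ρ * (2*(1-ρ)/(2-ρ)/ρ) + (2 - 2*ρ) * (2*(1-ρ)/(2-ρ)/ρ)) = 0 := by
    field_simp
    ring
  rw [e2, zero_smul, add_zero]

/-- For the regularized cloaking map `F = F_ρ⁽¹⁾` with `a = 2(1-ρ)/(2-ρ)`, `b = 1/(2-ρ)`,
and any field `E : ℝ³ \ {0} → ℂ³`, the push-forward field `Ẽ(x) = (DF(y))⁻ᵀ E(y)`,
`y = F⁻¹(x)`, satisfies for `‖x‖ = 1`: `F⁻¹(x) = ρx` and `x × Ẽ(x) = ρ (x × E(ρx))`. -/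
theorem pushforward_interface_condition (ρ : ℝ) (hρ0 : 0 < ρ) (hρ1 : ρ < 1)
    (E : EuclideanSpace ℝ (Fin 3) → (Fin 3 → ℂ))
    (x : EuclideanSpace ℝ (Fin 3)) (hx : ‖x‖ = 1) :
    Frad (2 * (1 - ρ) / (2 - ρ)) (1 / (2 - ρ)) (ρ • x) = x ∧
    crossProduct (fun i => (x i : ℂ))
        ((((JacFrad (2 * (1 - ρ) / (2 - ρ)) (1 / (2 - ρ)) (ρ • x)).transpose)⁻¹.map
            Complex.ofReal) *ᵥ E (ρ • x))
      = (ρ : ℂ) • crossProduct (fun i => (x i : ℂ)) (E (ρ • x)) := by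
  have hρ : ρ ≠ 0 := ne_of_gt hρ0
  have h2ρ : 2 - ρ ≠ 0 := by linarith
  have hny : ‖ρ • x‖ = ρ := by
    rw [norm_smul, hx, Real.norm_eq_abs, abs_of_pos hρ0, mul_one]
  constructor
  · unfold Frad
    rw [hny, smul_smul]
    have : (2 * (1 - ρ) / (2 - ρ) + 1 / (2 - ρ) * ρ) / ρ * ρ = 1 := by
      field_simp
      ring
    rw [this, one_smul]
  · rw [key_inv ρ hρ0 hρ1 x hx]
    funext i
    fin_cases i <;>
      simp [cross_apply, Matrix.mulVec, dotProduct, Fin.sum_univ_three,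
        Matrix.map_apply, Matrix.one_apply, Matrix.add_apply, Matrix.smul_apply,
        Pi.smul_apply, smul_eq_mul] <;> ring
end

section
/- For every integer n ≥ 0, lim_{t→0⁺} t^{n+1}·h_n(t) = −i·(2n−1)!!. -/
open Filter Topology Polynomial
open scoped Nat

/-- `sphf n` from Rayleigh's formula: `sphf 0 t = sin t / t`,
`sphf (m+1) t = (sphf m)'(t) / t`. -/
noncomputable def sphf : ℕ → ℝ → ℝ
  | 0 => fun t => Real.sin t / t
  | m + 1 => fun t => deriv (sphf m) t / t

/-- `sphg n` from Rayleigh's formula: `sphg 0 t = cos t / t`,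
`sphg (m+1) t = (sphg m)'(t) / t`. -/
noncomputable def sphg : ℕ → ℝ → ℝ
  | 0 => fun t => Real.cos t / t
  | m + 1 => fun t => deriv (sphg m) t / t

/-- The spherical Bessel function of the first kind, `j_n(t) = (-1)ⁿ tⁿ f_n(t)`. -/
noncomputable def sphj (n : ℕ) (t : ℝ) : ℝ := (-1) ^ n * t ^ n * sphf n t

/-- The spherical Bessel function of the second kind, `y_n(t) = -(-1)ⁿ tⁿ g_n(t)`. -/
noncomputable def sphy (n : ℕ) (t : ℝ) : ℝ := -((-1) ^ n * t ^ n * sphg n t)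

/-- The spherical Hankel function of the first kind, `h_n(t) = j_n(t) + i y_n(t)`. -/
noncomputable def sphh (n : ℕ) (t : ℝ) : ℂ := (sphj n t : ℂ) + Complex.I * (sphy n t : ℂ)

/-- `𝒥_n(t) = j_n(t) + t j_n'(t)`. -/
noncomputable def sphJ (n : ℕ) (t : ℝ) : ℝ := sphj n t + t * deriv (sphj n) t

/-- `ℋ_n(t) = h_n(t) + t h_n'(t)`. -/
noncomputable def sphH (n : ℕ) (t : ℝ) : ℂ := sphh n t + t * deriv (sphh n) t

noncomputable def pqStep (pq : ℝ[X] × ℝ[X]) : ℝ[X] × ℝ[X] :=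
  (-(X ^ 3 * pq.1.derivative) - X * pq.2, -(X ^ 3 * pq.2.derivative) + X * pq.1)

noncomputable def cf (P Q : ℝ[X]) (t : ℝ) : ℝ :=
  P.eval t⁻¹ * Real.sin t + Q.eval t⁻¹ * Real.cos t

lemma hasDerivAt_cf (P Q : ℝ[X]) {t : ℝ} (ht : t ≠ 0) :
    HasDerivAt (cf P Q)
      (((-(t ^ 2)⁻¹ * P.derivative.eval t⁻¹) * Real.sin t + P.eval t⁻¹ * Real.cos t)
        + ((-(t ^ 2)⁻¹ * Q.derivative.eval t⁻¹) * Real.cos t + Q.eval t⁻¹ * (-Real.sin t))) t := by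
  have hinv : HasDerivAt (fun t : ℝ => t⁻¹) (-(t ^ 2)⁻¹) t := hasDerivAt_inv ht
  have hP : HasDerivAt (fun t : ℝ => P.eval t⁻¹) (-(t ^ 2)⁻¹ * P.derivative.eval t⁻¹) t := by
    simpa [mul_comm, Function.comp_def] using (P.hasDerivAt t⁻¹).comp t hinv
  have hQ : HasDerivAt (fun t : ℝ => Q.eval t⁻¹) (-(t ^ 2)⁻¹ * Q.derivative.eval t⁻¹) t := by
    simpa [mul_comm, Function.comp_def] using (Q.hasDerivAt t⁻¹).comp t hinv
  exact (hP.mul (Real.hasDerivAt_sin t)).add (hQ.mul (Real.hasDerivAt_cos t))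

lemma closed_rec (f : ℕ → ℝ → ℝ) (hrec : ∀ m, f (m + 1) = fun t => deriv (f m) t / t)
    (pq₀ : ℝ[X] × ℝ[X]) (h0 : ∀ t : ℝ, t ≠ 0 → f 0 t = cf pq₀.1 pq₀.2 t) :
    ∀ n, ∀ t : ℝ, t ≠ 0 → f n t = cf (pqStep^[n] pq₀).1 (pqStep^[n] pq₀).2 t := by
  intro n
  induction n with
  | zero => simpa using h0
  | succ m ih =>
    intro t ht
    have heq : f m =ᶠ[𝓝 t] cf (pqStep^[m] pq₀).1 (pqStep^[m] pq₀).2 := by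
      filter_upwards [isOpen_compl_singleton.mem_nhds (by simpa using ht)] with s hs
      exact ih s hs
    set P := (pqStep^[m] pq₀).1
    set Q := (pqStep^[m] pq₀).2
    have hd : deriv (f m) t =
        ((-(t ^ 2)⁻¹ * P.derivative.eval t⁻¹) * Real.sin t + P.eval t⁻¹ * Real.cos t)
          + ((-(t ^ 2)⁻¹ * Q.derivative.eval t⁻¹) * Real.cos t + Q.eval t⁻¹ * (-Real.sin t)) := by
      rw [heq.deriv_eq]
      exact (hasDerivAt_cf P Q ht).deriv
    rw [hrec m]
    simp only [hd, Function.iterate_succ_apply']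
    show _ = cf (pqStep (P, Q)).1 (pqStep (P, Q)).2 t
    simp only [pqStep, cf, eval_sub, eval_add, eval_neg, eval_mul, eval_pow, eval_X]
    field_simp
    ring

/-- coefficient vanishing above degree `2m+1` -/
def Bnd (m : ℕ) (pq : ℝ[X] × ℝ[X]) : Prop :=
  ∀ k, 2 * m + 1 < k → pq.1.coeff k = 0 ∧ pq.2.coeff k = 0

lemma coeff_X_pow_mul' (p : ℝ[X]) (n k : ℕ) (h : n ≤ k) :
    (X ^ n * p).coeff k = p.coeff (k - n) := by
  conv_lhs => rw [show k = (k - n) + n by omega]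
  exact coeff_X_pow_mul p n (k - n)

lemma bnd_step {m : ℕ} {pq : ℝ[X] × ℝ[X]} (h : Bnd m pq) : Bnd (m + 1) (pqStep pq) := by
  intro k hk
  have h3 : (X ^ 3 * pq.1.derivative).coeff k = 0 := by
    rw [coeff_X_pow_mul' _ _ _ (by omega), coeff_derivative,
      (h (k - 3 + 1) (by omega)).1, zero_mul]
  have h4 : (X ^ 3 * pq.2.derivative).coeff k = 0 := by
    rw [coeff_X_pow_mul' _ _ _ (by omega), coeff_derivative,
      (h (k - 3 + 1) (by omega)).2, zero_mul]
  have h1 : (X * pq.2).coeff k = 0 := by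
    rw [show (X : ℝ[X]) = X ^ 1 by ring, coeff_X_pow_mul' _ _ _ (by omega)]
    exact (h (k - 1) (by omega)).2
  have h2 : (X * pq.1).coeff k = 0 := by
    rw [show (X : ℝ[X]) = X ^ 1 by ring, coeff_X_pow_mul' _ _ _ (by omega)]
    exact (h (k - 1) (by omega)).1
  constructor <;> simp [pqStep, h1, h2, h3, h4]

lemma top_step {m : ℕ} {pq : ℝ[X] × ℝ[X]} (h : Bnd m pq) :
    (pqStep pq).1.coeff (2 * (m + 1) + 1) = -(2 * m + 1 : ℝ) * pq.1.coeff (2 * m + 1) ∧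
    (pqStep pq).2.coeff (2 * (m + 1) + 1) = -(2 * m + 1 : ℝ) * pq.2.coeff (2 * m + 1) := by
  have e1 : (X ^ 3 * pq.1.derivative).coeff (2 * (m + 1) + 1) =
      pq.1.coeff (2 * m + 1) * (2 * m + 1 : ℝ) := by
    rw [coeff_X_pow_mul' _ _ _ (by omega), show 2 * (m + 1) + 1 - 3 = 2 * m by omega,
      coeff_derivative]
    push_cast; ring_nf
  have e2 : (X ^ 3 * pq.2.derivative).coeff (2 * (m + 1) + 1) =
      pq.2.coeff (2 * m + 1) * (2 * m + 1 : ℝ) := by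
    rw [coeff_X_pow_mul' _ _ _ (by omega), show 2 * (m + 1) + 1 - 3 = 2 * m by omega,
      coeff_derivative]
    push_cast; ring_nf
  have e3 : (X * pq.2).coeff (2 * (m + 1) + 1) = 0 := by
    rw [show (X : ℝ[X]) = X ^ 1 by ring, coeff_X_pow_mul' _ _ _ (by omega)]
    exact (h _ (by omega)).2
  have e4 : (X * pq.1).coeff (2 * (m + 1) + 1) = 0 := by
    rw [show (X : ℝ[X]) = X ^ 1 by ring, coeff_X_pow_mul' _ _ _ (by omega)]
    exact (h _ (by omega)).1
  constructor <;> simp [pqStep, e1, e2, e3, e4] <;> try ring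

lemma doubleFact_succ (n : ℕ) : (2 * (n + 1) - 1)‼ = (2 * n + 1) * (2 * n - 1)‼ := by
  cases n with
  | zero => decide
  | succ k =>
    have : 2 * (k + 1 + 1) - 1 = (2 * (k + 1) - 1) + 2 := by omega
    rw [this, Nat.doubleFactorial_add_two,
      show 2 * (k + 1) - 1 + 2 = 2 * (k + 1) + 1 from by omega]

lemma pq_props (pq₀ : ℝ[X] × ℝ[X]) (h0 : Bnd 0 pq₀) (n : ℕ) :
    Bnd n (pqStep^[n] pq₀) ∧
    (pqStep^[n] pq₀).1.coeff (2 * n + 1) =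
      (-1 : ℝ) ^ n * ((2 * n - 1)‼ : ℕ) * pq₀.1.coeff 1 ∧
    (pqStep^[n] pq₀).2.coeff (2 * n + 1) =
      (-1 : ℝ) ^ n * ((2 * n - 1)‼ : ℕ) * pq₀.2.coeff 1 := by
  induction n with
  | zero => simpa using h0
  | succ m ih =>
    obtain ⟨hb, hp, hq⟩ := ih
    refine ⟨by simpa [Function.iterate_succ_apply'] using bnd_step hb, ?_, ?_⟩ <;>
      rw [Function.iterate_succ_apply']
    · rw [(top_step hb).1, hp, doubleFact_succ]; push_cast; ring
    · rw [(top_step hb).2, hq, doubleFact_succ]; push_cast; ring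

lemma pow_mul_eval_inv (t : ℝ) (ht : t ≠ 0) (N : ℕ) (f : ℝ[X]) (hf : f.natDegree ≤ N) :
    t ^ N * f.eval t⁻¹ = (reflect N f).eval t := by
  letI := invertibleOfNonzero (inv_ne_zero ht)
  have := eval₂_reflect_mul_pow (RingHom.id ℝ) t⁻¹ N f hf
  simp only [eval₂_eq_eval_map, Polynomial.map_id] at this
  have hi : (⅟(t⁻¹) : ℝ) = t := invOf_eq_right_inv (by field_simp)
  rw [hi] at this
  rw [← this, inv_pow]; field_simp

lemma tendsto_pow_eval_inv (N : ℕ) (P : ℝ[X]) (h : ∀ k, N < k → P.coeff k = 0) :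
    Tendsto (fun t : ℝ => t ^ N * P.eval t⁻¹) (𝓝[>] 0) (𝓝 (P.coeff N)) := by
  have hdeg : P.natDegree ≤ N := natDegree_le_iff_coeff_eq_zero.2 h
  have hc : Tendsto (fun t : ℝ => (reflect N P).eval t) (𝓝[>] 0) (𝓝 (P.coeff N)) := by
    have : ContinuousAt (fun t : ℝ => (reflect N P).eval t) 0 :=
      (Polynomial.continuous _).continuousAt
    have h0 : (reflect N P).eval 0 = P.coeff N := by
      rw [← coeff_zero_eq_eval_zero, coeff_reflect]
      simp [revAt_le (Nat.zero_le N)]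
    rw [← h0]
    exact this.tendsto.mono_left nhdsWithin_le_nhds
  refine hc.congr' ?_
  filter_upwards [self_mem_nhdsWithin] with t (ht : 0 < t)
  exact (pow_mul_eval_inv t ht.ne' N P hdeg).symm

lemma tendsto_cf (n : ℕ) (P Q : ℝ[X]) (hb : Bnd n (P, Q)) :
    Tendsto (fun t : ℝ => t ^ (2 * n + 1) * cf P Q t) (𝓝[>] 0) (𝓝 (Q.coeff (2 * n + 1))) := by
  have hP := tendsto_pow_eval_inv (2 * n + 1) P (fun k hk => (hb k hk).1)
  have hQ := tendsto_pow_eval_inv (2 * n + 1) Q (fun k hk => (hb k hk).2)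
  have hs : Tendsto Real.sin (𝓝[>] (0 : ℝ)) (𝓝 0) := by
    simpa using (Real.continuous_sin.tendsto 0).mono_left nhdsWithin_le_nhds
  have hc : Tendsto Real.cos (𝓝[>] (0 : ℝ)) (𝓝 1) := by
    simpa using (Real.continuous_cos.tendsto 0).mono_left nhdsWithin_le_nhds
  have h := (hP.mul hs).add (hQ.mul hc)
  simp only [mul_zero, mul_one, zero_add] at h
  refine h.congr fun t => ?_
  simp only [cf]; ring

lemma bnd0_f : Bnd 0 ((X : ℝ[X]), (0 : ℝ[X])) := by
  intro k hk
  constructor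
  · rw [coeff_X]; simp; omega
  · simp

lemma bnd0_g : Bnd 0 ((0 : ℝ[X]), (X : ℝ[X])) := by
  intro k hk
  constructor
  · simp
  · rw [coeff_X]; simp; omega


/-- Small-argument asymptotics of the spherical Hankel function:
`lim_{t→0⁺} t^{n+1} h_n(t) = -i (2n-1)!!` (with `(-1)!! = 1`). -/
theorem sphh_small_argument_limit (n : ℕ) :
    Tendsto (fun t : ℝ => (t : ℂ) ^ (n + 1) * sphh n t) (𝓝[>] 0)
      (𝓝 (-Complex.I * (((2 * n - 1)‼ : ℕ) : ℂ))) := by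
  simp only [sphh, sphj, sphy]
  have hf := closed_rec sphf (fun m => rfl) (X, 0)
    (fun t ht => by simp [sphf, cf, div_eq_mul_inv, mul_comm]) n
  have hg := closed_rec sphg (fun m => rfl) (0, X)
    (fun t ht => by simp [sphg, cf, div_eq_mul_inv, mul_comm]) n
  obtain ⟨hbF, hpF, hqF⟩ := pq_props (X, 0) bnd0_f n
  obtain ⟨hbG, hpG, hqG⟩ := pq_props (0, X) bnd0_g n
  set PF := (pqStep^[n] ((X : ℝ[X]), (0 : ℝ[X]))) with hPF
  set PG := (pqStep^[n] ((0 : ℝ[X]), (X : ℝ[X]))) with hPG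
  have hbF' : Bnd n (PF.1, PF.2) := hbF
  have hbG' : Bnd n (PG.1, PG.2) := hbG
  have hqF' : PF.2.coeff (2 * n + 1) = 0 := by simpa using hqF
  have hqG' : PG.2.coeff (2 * n + 1) = (-1 : ℝ) ^ n * ((2 * n - 1)‼ : ℕ) := by
    simpa using hqG
  have hu : Tendsto (fun t : ℝ => t ^ (n + 1) * ((-1) ^ n * t ^ n * sphf n t)) (𝓝[>] 0)
      (𝓝 0) := by
    have h := (tendsto_cf n PF.1 PF.2 hbF').const_mul ((-1 : ℝ) ^ n)
    rw [hqF', mul_zero] at h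
    refine h.congr' ?_
    filter_upwards [self_mem_nhdsWithin] with t (ht : 0 < t)
    rw [hf t ht.ne']
    ring
  have hv : Tendsto (fun t : ℝ => t ^ (n + 1) * (-((-1) ^ n * t ^ n * sphg n t))) (𝓝[>] 0)
      (𝓝 (-(((2 * n - 1)‼ : ℕ) : ℝ))) := by
    have h := (tendsto_cf n PG.1 PG.2 hbG').const_mul (-(-1 : ℝ) ^ n)
    rw [hqG'] at h
    have hval : -(-1 : ℝ) ^ n * ((-1 : ℝ) ^ n * ((2 * n - 1)‼ : ℕ)) =
        -(((2 * n - 1)‼ : ℕ) : ℝ) := by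
      rw [← mul_assoc, neg_mul, ← pow_add, ← two_mul, pow_mul]
      simp
    rw [hval] at h
    refine h.congr' ?_
    filter_upwards [self_mem_nhdsWithin] with t (ht : 0 < t)
    rw [hg t ht.ne']
    ring
  have hC : Tendsto (fun t : ℝ =>
      ((t ^ (n + 1) * ((-1) ^ n * t ^ n * sphf n t) : ℝ) : ℂ) +
        Complex.I * ((t ^ (n + 1) * (-((-1) ^ n * t ^ n * sphg n t)) : ℝ) : ℂ)) (𝓝[>] 0)
      (𝓝 (((0 : ℝ) : ℂ) + Complex.I * ((-(((2 * n - 1)‼ : ℕ) : ℝ) : ℝ) : ℂ))) :=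
    ((Complex.continuous_ofReal.tendsto _).comp hu).add
      (tendsto_const_nhds.mul ((Complex.continuous_ofReal.tendsto _).comp hv))
  have hval : (((0 : ℝ) : ℂ) + Complex.I * ((-(((2 * n - 1)‼ : ℕ) : ℝ) : ℝ) : ℂ)) =
      -Complex.I * (((2 * n - 1)‼ : ℕ) : ℂ) := by
    push_cast; ring
  rw [hval] at hC
  refine hC.congr fun t => ?_
  push_cast
  ring
end

section
/- With notation as below, there exists ρ₀ > 0 such that D'_n(ρ) ≠ 0 for all 0 < ρ < ρ₀, and lim_{ρ→0⁺} ρ^{−(n+1)}·t₃'(ρ) = (2i·√π·(𝒥_n(kω)·h_n(kω) − ℋ_n(kω)·j_n(kω))/(Γ(n+1/2)·μ₀^{−1/2}·k·n·j_n(kω)))·(ω/2)^{n+1} and lim_{ρ→0⁺} t₄'(ρ) = −h_n(kω)/j_n(kω). -/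
open Filter Topology
open scoped Nat

/-- The determinant `D'_n(ρ) = ε₀^{-1/2} ρ h_n(ωρ) 𝒥_n(kω) - μ₀^{-1/2} k ℋ_n(ωρ) j_n(kω)`. -/
noncomputable def Dn' (ε₀ μ₀ ω k : ℝ) (n : ℕ) (ρ : ℝ) : ℂ :=
  (Real.sqrt ε₀)⁻¹ * ρ * sphh n (ω * ρ) * sphJ n (k * ω)
    - (Real.sqrt μ₀)⁻¹ * k * sphH n (ω * ρ) * sphj n (k * ω)

/-- `t₃(ρ) = (μ₀^{-1/2} k 𝒥_n(ωρ) j_n(kω) - ε₀^{-1/2} ρ j_n(ωρ) 𝒥_n(kω)) / D'_n(ρ)`. -/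
noncomputable def t3 (ε₀ μ₀ ω k : ℝ) (n : ℕ) (ρ : ℝ) : ℂ :=
  ((Real.sqrt μ₀)⁻¹ * k * sphJ n (ω * ρ) * sphj n (k * ω)
    - (Real.sqrt ε₀)⁻¹ * ρ * sphj n (ω * ρ) * sphJ n (k * ω)) / Dn' ε₀ μ₀ ω k n ρ

/-- `t₄(ρ) = ρ (𝒥_n(ωρ) h_n(ωρ) - j_n(ωρ) ℋ_n(ωρ)) / D'_n(ρ)`. -/
noncomputable def t4 (ε₀ μ₀ ω k : ℝ) (n : ℕ) (ρ : ℝ) : ℂ :=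
  (ρ * (sphJ n (ω * ρ) * sphh n (ω * ρ) - sphj n (ω * ρ) * sphH n (ω * ρ)))
    / Dn' ε₀ μ₀ ω k n ρ

/-- `t₃'(ρ) = (𝒥_n(kω) h_n(kω) - ℋ_n(kω) j_n(kω)) / D'_n(ρ)`. -/
noncomputable def t3' (ε₀ μ₀ ω k : ℝ) (n : ℕ) (ρ : ℝ) : ℂ :=
  (sphJ n (k * ω) * sphh n (k * ω) - sphH n (k * ω) * sphj n (k * ω))
    / Dn' ε₀ μ₀ ω k n ρ

/-- `t₄'(ρ) = (μ₀^{-1/2} k h_n(kω) ℋ_n(ωρ) - ε₀^{-1/2} ρ ℋ_n(kω) h_n(ωρ)) / D'_n(ρ)`. -/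
noncomputable def t4' (ε₀ μ₀ ω k : ℝ) (n : ℕ) (ρ : ℝ) : ℂ :=
  ((Real.sqrt μ₀)⁻¹ * k * sphh n (k * ω) * sphH n (ω * ρ)
    - (Real.sqrt ε₀)⁻¹ * ρ * sphH n (k * ω) * sphh n (ω * ρ)) / Dn' ε₀ μ₀ ω k n ρ


/-! ### Auxiliary development -/

open Polynomial in
noncomputable def fpAux (m : ℕ) (p : Polynomial ℝ × Polynomial ℝ) : Polynomial ℝ × Polynomial ℝ :=
  (X * (derivative p.1 - p.2) - C (2*m+1 : ℝ) * p.1,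
   X * (derivative p.2 + p.1) - C (2*m+1 : ℝ) * p.2)

noncomputable def FP : ℕ → Polynomial ℝ × Polynomial ℝ
  | 0 => (1, 0)
  | m+1 => fpAux m (FP m)

noncomputable def GP : ℕ → Polynomial ℝ × Polynomial ℝ
  | 0 => (0, 1)
  | m+1 => fpAux m (GP m)

noncomputable def cc : ℕ → ℝ
  | 0 => 1
  | m+1 => (2*m+1) * cc m

lemma cc_pos (m : ℕ) : 0 < cc m := by
  induction m with
  | zero => norm_num [cc]
  | succ m ih =>
    have : (0:ℝ) < 2*m+1 := by positivity
    simpa [cc] using mul_pos this ih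

lemma cc_eq_gamma (m : ℕ) : cc m = Real.Gamma (m + 1/2) * 2^m / Real.sqrt Real.pi := by
  induction m with
  | zero =>
    have h0 : ((0:ℕ):ℝ) + 1/2 = 1/2 := by norm_num
    rw [h0, Real.Gamma_one_half_eq]
    simp [cc, div_self (Real.sqrt_ne_zero'.mpr Real.pi_pos)]
  | succ m ih =>
    have hne : (m : ℝ) + 1/2 ≠ 0 := by positivity
    have h1 : ((m : ℕ) + 1 : ℝ) + 1/2 = ((m : ℝ) + 1/2) + 1 := by push_cast; ring
    rw [cc, ih]
    push_cast
    rw [h1, Real.Gamma_add_one hne]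
    ring

lemma FP2_eval0 (m : ℕ) : (FP m).2.eval 0 = 0 := by
  induction m with
  | zero => simp [FP]
  | succ m ih => simp [FP, fpAux, ih]

lemma GP2_eval0 (m : ℕ) : (GP m).2.eval 0 = (-1)^m * cc m := by
  induction m with
  | zero => simp [GP, cc]
  | succ m ih => simp [GP, fpAux, ih, cc, pow_succ]; ring

lemma rep_step {f : ℝ → ℝ} {a b : Polynomial ℝ} {m : ℕ}
    (hf : ∀ t : ℝ, t ≠ 0 → f t = (a.eval t * Real.sin t + b.eval t * Real.cos t) / t ^ (2*m+1))
    (t : ℝ) (ht : t ≠ 0) :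
    deriv f t / t = ((fpAux m (a,b)).1.eval t * Real.sin t
      + (fpAux m (a,b)).2.eval t * Real.cos t) / t ^ (2*(m+1)+1) := by
  have hev : f =ᶠ[𝓝 t] fun s => (a.eval s * Real.sin s + b.eval s * Real.cos s) / s ^ (2*m+1) := by
    filter_upwards [isOpen_ne.mem_nhds ht] with s hs using hf s hs
  have hN : HasDerivAt (fun s => a.eval s * Real.sin s + b.eval s * Real.cos s)
      ((a.derivative.eval t - b.eval t) * Real.sin t
        + (a.eval t + b.derivative.eval t) * Real.cos t) t := by
    have h1 := (a.hasDerivAt t).mul (Real.hasDerivAt_sin t)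
    have h2 := (b.hasDerivAt t).mul (Real.hasDerivAt_cos t)
    exact (h1.add h2).congr_deriv (by ring)
  have hD : HasDerivAt (fun s : ℝ => s ^ (2*m+1)) (((2*m+1 : ℕ) : ℝ) * t ^ (2*m)) t := by
    simpa using hasDerivAt_pow (2*m+1) t
  have h : HasDerivAt (fun s => (a.eval s * Real.sin s + b.eval s * Real.cos s) / s ^ (2*m+1)) _ t :=
    hN.div hD (pow_ne_zero _ ht)
  rw [hev.deriv_eq, h.deriv]
  have hpow : t ^ (2*m+1) ≠ 0 := pow_ne_zero _ ht
  simp only [fpAux, Polynomial.eval_sub, Polynomial.eval_add, Polynomial.eval_mul,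
    Polynomial.eval_X, Polynomial.eval_C]
  push_cast
  field_simp
  ring

lemma sphf_rep (m : ℕ) (t : ℝ) (ht : t ≠ 0) :
    sphf m t = ((FP m).1.eval t * Real.sin t + (FP m).2.eval t * Real.cos t) / t ^ (2*m+1) := by
  induction m generalizing t with
  | zero => simp [sphf, FP]
  | succ m ih =>
    show deriv (sphf m) t / t = _
    exact rep_step (fun s hs => ih s hs) t ht

lemma sphg_rep (m : ℕ) (t : ℝ) (ht : t ≠ 0) :
    sphg m t = ((GP m).1.eval t * Real.sin t + (GP m).2.eval t * Real.cos t) / t ^ (2*m+1) := by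
  induction m generalizing t with
  | zero => simp [sphg, GP]
  | succ m ih =>
    show deriv (sphg m) t / t = _
    exact rep_step (fun s hs => ih s hs) t ht

lemma diff_of_rep {f : ℝ → ℝ} {a b : Polynomial ℝ} {m : ℕ}
    (hf : ∀ t : ℝ, t ≠ 0 → f t = (a.eval t * Real.sin t + b.eval t * Real.cos t) / t ^ (2*m+1))
    {t : ℝ} (ht : t ≠ 0) : DifferentiableAt ℝ f t := by
  have hev : f =ᶠ[𝓝 t] fun s => (a.eval s * Real.sin s + b.eval s * Real.cos s) / s ^ (2*m+1) := by
    filter_upwards [isOpen_ne.mem_nhds ht] with s hs using hf s hs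
  rw [hev.differentiableAt_iff]
  exact (((a.differentiableAt).mul Real.differentiable_sin.differentiableAt).add
      ((b.differentiableAt).mul Real.differentiable_cos.differentiableAt)).div
    (differentiableAt_pow _) (pow_ne_zero _ ht)

lemma sphf_differentiableAt (m : ℕ) {t : ℝ} (ht : t ≠ 0) : DifferentiableAt ℝ (sphf m) t :=
  diff_of_rep (sphf_rep m) ht

lemma sphg_differentiableAt (m : ℕ) {t : ℝ} (ht : t ≠ 0) : DifferentiableAt ℝ (sphg m) t :=
  diff_of_rep (sphg_rep m) ht

lemma sphf_deriv_eq (m : ℕ) {t : ℝ} (ht : t ≠ 0) : deriv (sphf m) t = t * sphf (m+1) t := by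
  have : sphf (m+1) t = deriv (sphf m) t / t := rfl
  rw [this]; field_simp

lemma sphg_deriv_eq (m : ℕ) {t : ℝ} (ht : t ≠ 0) : deriv (sphg m) t = t * sphg (m+1) t := by
  have : sphg (m+1) t = deriv (sphg m) t / t := rfl
  rw [this]; field_simp

lemma sphj_hasDerivAt (n : ℕ) {t : ℝ} (ht : t ≠ 0) :
    HasDerivAt (sphj n)
      ((-1)^n * (n * t^(n-1) * sphf n t + t^(n+1) * sphf (n+1) t)) t := by
  have h1 : HasDerivAt (fun s : ℝ => (-1:ℝ)^n * s ^ n) ((-1:ℝ)^n * (n * t^(n-1))) t :=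
    (hasDerivAt_pow n t).const_mul _
  have h2 : HasDerivAt (sphf n) (t * sphf (n+1) t) t := by
    have := (sphf_differentiableAt n ht).hasDerivAt
    rwa [sphf_deriv_eq n ht] at this
  have h3 : HasDerivAt (fun s => ((-1:ℝ)^n * s ^ n) * sphf n s) _ t := h1.mul h2
  have hfun : sphj n = fun s => ((-1:ℝ)^n * s ^ n) * sphf n s := rfl
  rw [hfun]
  convert h3 using 1
  ring

lemma sphy_hasDerivAt (n : ℕ) {t : ℝ} (ht : t ≠ 0) :
    HasDerivAt (sphy n)
      (-((-1)^n * (n * t^(n-1) * sphg n t + t^(n+1) * sphg (n+1) t))) t := by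
  have h1 : HasDerivAt (fun s : ℝ => (-1:ℝ)^n * s ^ n) ((-1:ℝ)^n * (n * t^(n-1))) t :=
    (hasDerivAt_pow n t).const_mul _
  have h2 : HasDerivAt (sphg n) (t * sphg (n+1) t) t := by
    have := (sphg_differentiableAt n ht).hasDerivAt
    rwa [sphg_deriv_eq n ht] at this
  have h3 : HasDerivAt (fun s => -(((-1:ℝ)^n * s ^ n) * sphg n s)) _ t := (h1.mul h2).neg
  have hfun : sphy n = fun s => -(((-1:ℝ)^n * s ^ n) * sphg n s) := rfl
  rw [hfun]
  convert h3 using 1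
  ring

lemma tendsto_pow_rep {f : ℝ → ℝ} {a b : Polynomial ℝ} {m : ℕ}
    (h : ∀ t : ℝ, t ≠ 0 → f t = (a.eval t * Real.sin t + b.eval t * Real.cos t) / t ^ (2*m+1)) :
    Tendsto (fun t : ℝ => t^(2*m+1) * f t) (𝓝[≠] (0:ℝ)) (𝓝 (b.eval 0)) := by
  have hc : Tendsto (fun t : ℝ => a.eval t * Real.sin t + b.eval t * Real.cos t)
      (𝓝[≠] (0:ℝ)) (𝓝 (b.eval 0)) := by
    have hcont : Continuous fun t : ℝ => a.eval t * Real.sin t + b.eval t * Real.cos t :=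
      ((a.continuous).mul Real.continuous_sin).add
        ((b.continuous).mul Real.continuous_cos)
    have h0 := (hcont.tendsto 0).mono_left (nhdsWithin_le_nhds (s := {(0:ℝ)}ᶜ))
    simpa using h0
  apply hc.congr'
  filter_upwards [self_mem_nhdsWithin] with t ht
  have ht' : t ≠ 0 := ht
  rw [h t ht']
  field_simp

lemma tendsto_f (m : ℕ) :
    Tendsto (fun t : ℝ => t^(2*m+1) * sphf m t) (𝓝[≠] (0:ℝ)) (𝓝 0) := by
  have := tendsto_pow_rep (sphf_rep m)
  rwa [FP2_eval0] at this

lemma tendsto_g (m : ℕ) :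
    Tendsto (fun t : ℝ => t^(2*m+1) * sphg m t) (𝓝[≠] (0:ℝ)) (𝓝 ((-1)^m * cc m)) := by
  have := tendsto_pow_rep (sphg_rep m)
  rwa [GP2_eval0] at this

lemma tendsto_j (n : ℕ) :
    Tendsto (fun t : ℝ => t^(n+1) * sphj n t) (𝓝[≠] (0:ℝ)) (𝓝 0) := by
  have h := (tendsto_f n).const_mul ((-1:ℝ)^n)
  rw [mul_zero] at h
  apply h.congr
  intro t
  simp only [sphj]
  ring

lemma tendsto_y (n : ℕ) :
    Tendsto (fun t : ℝ => t^(n+1) * sphy n t) (𝓝[≠] (0:ℝ)) (𝓝 (-cc n)) := by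
  have h := (tendsto_g n).const_mul (-(-1:ℝ)^n)
  have hv : -(-1:ℝ)^n * ((-1)^n * cc n) = -cc n := by
    rcases Nat.even_or_odd n with he | ho
    · simp [he.neg_one_pow]
    · simp [ho.neg_one_pow]
  rw [hv] at h
  apply h.congr
  intro t
  simp only [sphy]
  ring

lemma tendsto_derivj (n : ℕ) (hn : 1 ≤ n) :
    Tendsto (fun t : ℝ => t^(n+2) * deriv (sphj n) t) (𝓝[≠] (0:ℝ)) (𝓝 0) := by
  obtain ⟨m, rfl⟩ : ∃ m, n = m + 1 := ⟨n - 1, by omega⟩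
  have h1 := (tendsto_f (m+1)).const_mul ((m:ℝ)+1)
  have h2 := tendsto_f (m+2)
  have h := ((h1.add h2).const_mul ((-1:ℝ)^(m+1)))
  simp only [mul_zero, add_zero] at h
  apply h.congr'
  filter_upwards [self_mem_nhdsWithin] with t ht
  rw [(sphj_hasDerivAt (m+1) ht).deriv]
  simp only [Nat.add_sub_cancel]
  push_cast
  ring

lemma tendsto_derivy (n : ℕ) (hn : 1 ≤ n) :
    Tendsto (fun t : ℝ => t^(n+2) * deriv (sphy n) t) (𝓝[≠] (0:ℝ)) (𝓝 ((n+1) * cc n)) := by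
  obtain ⟨m, rfl⟩ : ∃ m, n = m + 1 := ⟨n - 1, by omega⟩
  have h1 := (tendsto_g (m+1)).const_mul ((m:ℝ)+1)
  have h2 := tendsto_g (m+2)
  have h := ((h1.add h2).const_mul (-(-1:ℝ)^(m+1)))
  have hv : -(-1:ℝ)^(m+1) * (((m:ℝ)+1) * ((-1)^(m+1) * cc (m+1)) + (-1)^(m+2) * cc (m+2))
      = ((m:ℝ)+1+1) * cc (m+1) := by
    have hcc : cc (m+2) = (2*(m+1:ℝ)+1) * cc (m+1) := by
      have : cc (m+2) = (2*((m+1):ℕ)+1 : ℝ) * cc (m+1) := rfl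
      rw [this]; push_cast; ring
    rcases Nat.even_or_odd (m+1) with he | ho
    · rw [hcc, he.neg_one_pow]
      have : (-1:ℝ)^(m+2) = -1 := by
        have : Odd (m+2) := by rcases he with ⟨r, hr⟩; exact ⟨r, by omega⟩
        exact this.neg_one_pow
      rw [this]; ring
    · rw [hcc, ho.neg_one_pow]
      have : (-1:ℝ)^(m+2) = 1 := by
        have : Even (m+2) := by rcases ho with ⟨r, hr⟩; exact ⟨r+1, by omega⟩
        exact this.neg_one_pow
      rw [this]; ring
  rw [hv] at h
  have hcast : ((m+1 : ℕ) : ℝ) + 1 = (m:ℝ)+1+1 := by push_cast; ring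
  rw [hcast]
  apply h.congr'
  filter_upwards [self_mem_nhdsWithin] with t ht
  rw [(sphy_hasDerivAt (m+1) ht).deriv]
  simp only [Nat.add_sub_cancel]
  push_cast
  ring

lemma tendsto_h (n : ℕ) :
    Tendsto (fun t : ℝ => ((t:ℂ))^(n+1) * sphh n t) (𝓝[≠] (0:ℝ))
      (𝓝 (-Complex.I * cc n)) := by
  have hj := (Complex.continuous_ofReal.tendsto 0).comp (tendsto_j n)
  have hy := (Complex.continuous_ofReal.tendsto (-cc n)).comp (tendsto_y n)
  have h := hj.add (hy.const_mul Complex.I)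
  have hv : ((0:ℝ):ℂ) + Complex.I * ((-cc n : ℝ):ℂ) = -Complex.I * cc n := by
    push_cast; ring
  rw [hv] at h
  apply h.congr
  intro t
  simp only [Function.comp, sphh]
  push_cast
  ring

lemma tendsto_derivh (n : ℕ) (hn : 1 ≤ n) :
    Tendsto (fun t : ℝ => ((t:ℂ))^(n+2) * deriv (sphh n) t) (𝓝[≠] (0:ℝ))
      (𝓝 (Complex.I * ((n:ℂ)+1) * cc n)) := by
  have hj := (Complex.continuous_ofReal.tendsto 0).comp (tendsto_derivj n hn)
  have hy := (Complex.continuous_ofReal.tendsto (((n:ℝ)+1) * cc n)).comp (tendsto_derivy n hn)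
  have h := hj.add (hy.const_mul Complex.I)
  have hv : ((0:ℝ):ℂ) + Complex.I * ((((n:ℝ)+1) * cc n : ℝ):ℂ)
      = Complex.I * ((n:ℂ)+1) * cc n := by push_cast; ring
  rw [hv] at h
  apply h.congr'
  filter_upwards [self_mem_nhdsWithin] with t ht
  have hdh : deriv (sphh n) t
      = Complex.ofReal (deriv (sphj n) t) + Complex.I * Complex.ofReal (deriv (sphy n) t) := by
    have hjd := sphj_hasDerivAt n ht
    have hyd := sphy_hasDerivAt n ht
    have hc := hjd.ofReal_comp.add ((hyd.ofReal_comp).const_mul Complex.I)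
    have : HasDerivAt (sphh n)
        ((((-1:ℝ)^n * (n * t^(n-1) * sphf n t + t^(n+1) * sphf (n+1) t) : ℝ) : ℂ)
          + Complex.I * ((-((-1:ℝ)^n * (n * t^(n-1) * sphg n t + t^(n+1) * sphg (n+1) t)) : ℝ) : ℂ)) t := hc
    rw [this.deriv, hjd.deriv, hyd.deriv]
  rw [hdh]
  simp only [Function.comp]
  push_cast
  ring

lemma tendsto_H (n : ℕ) (hn : 1 ≤ n) :
    Tendsto (fun t : ℝ => ((t:ℂ))^(n+1) * sphH n t) (𝓝[≠] (0:ℝ))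
      (𝓝 (Complex.I * n * cc n)) := by
  have h := (tendsto_h n).add (tendsto_derivh n hn)
  have hv : -Complex.I * cc n + Complex.I * ((n:ℂ)+1) * cc n = Complex.I * n * cc n := by
    ring
  rw [hv] at h
  apply h.congr
  intro t
  simp only [sphH]
  push_cast
  ring

lemma div_identity1 (n : ℕ) (S m K N C W J P : ℂ) (hm : m ≠ 0) (hK : K ≠ 0) (hN : N ≠ 0)
    (hC : C ≠ 0) (hW : W ≠ 0) (hJ : J ≠ 0) (hP : P ≠ 0) :
    S / (m⁻¹ * K * -(Complex.I * N * C / W^(n+1)) * J)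
      = 2 * Complex.I * P * S / (C * P / 2^n * m⁻¹ * K * N * J) * (W/2)^(n+1) := by
  have hI := Complex.I_ne_zero
  rw [div_pow]
  field_simp
  ring_nf
  simp [Complex.I_sq]

lemma div_identity2 (m K h X j : ℂ) (hm : m ≠ 0) (hK : K ≠ 0) (hX : X ≠ 0) (hj : j ≠ 0) :
    m⁻¹ * K * h * X / (m⁻¹ * K * -X * j) = -(h / j) := by
  field_simp

/-- Small-`ρ` asymptotics of `t₃'` and `t₄'`: `D'_n(ρ) ≠ 0` for small `ρ > 0`,
`ρ^{-(n+1)} t₃'(ρ) → (2i√π(𝒥_n(kω)h_n(kω) - ℋ_n(kω)j_n(kω))/(Γ(n+1/2) μ₀^{-1/2} k n j_n(kω)))(ω/2)^{n+1}`,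
and `t₄'(ρ) → -h_n(kω)/j_n(kω)`. -/
theorem t3'_t4'_small_rho_asymptotics (ε₀ μ₀ ω : ℝ)
    (hε : 0 < ε₀) (hμ : 0 < μ₀) (hω : 0 < ω)
    (k : ℝ) (hk : k = Real.sqrt (μ₀ * ε₀)) (n : ℕ) (hn : 1 ≤ n)
    (hj : sphj n (k * ω) ≠ 0) :
    ∃ ρ₀ > (0 : ℝ),
      (∀ ρ : ℝ, 0 < ρ → ρ < ρ₀ → Dn' ε₀ μ₀ ω k n ρ ≠ 0) ∧
      Tendsto (fun ρ : ℝ => t3' ε₀ μ₀ ω k n ρ / (ρ : ℂ) ^ (n + 1)) (𝓝[>] 0)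
        (𝓝 (2 * Complex.I * Real.sqrt Real.pi
          * (sphJ n (k * ω) * sphh n (k * ω) - sphH n (k * ω) * sphj n (k * ω))
          / (Real.Gamma (n + 1 / 2) * (Real.sqrt μ₀)⁻¹ * k * n * sphj n (k * ω))
          * ((ω / 2 : ℝ) : ℂ) ^ (n + 1))) ∧
      Tendsto (fun ρ : ℝ => t4' ε₀ μ₀ ω k n ρ) (𝓝[>] 0)
        (𝓝 (-(sphh n (k * ω) / sphj n (k * ω)))) := by
  have hk0 : 0 < k := hk ▸ Real.sqrt_pos.mpr (mul_pos hμ hε)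
  have hkne : (k:ℂ) ≠ 0 := by exact_mod_cast hk0.ne'
  have hsμ : Real.sqrt μ₀ ≠ 0 := (Real.sqrt_pos.mpr hμ).ne'
  have hsμc : ((Real.sqrt μ₀ : ℝ):ℂ) ≠ 0 := Complex.ofReal_ne_zero.mpr hsμ
  have hωne : (ω:ℂ) ≠ 0 := by exact_mod_cast hω.ne'
  have hnne : (n:ℂ) ≠ 0 := by exact_mod_cast (by omega : n ≠ 0)
  have hccne : ((cc n : ℝ):ℂ) ≠ 0 := by exact_mod_cast (cc_pos n).ne'
  have hjne : ((sphj n (k*ω) : ℝ):ℂ) ≠ 0 := Complex.ofReal_ne_zero.mpr hj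
  have hmap : Tendsto (fun ρ : ℝ => ω * ρ) (𝓝[>] (0:ℝ)) (𝓝[≠] (0:ℝ)) := by
    rw [tendsto_nhdsWithin_iff]
    constructor
    · have h0 : Tendsto (fun ρ : ℝ => ω * ρ) (𝓝 0) (𝓝 (ω * 0)) :=
        (continuous_const.mul continuous_id).tendsto 0
      rw [mul_zero] at h0
      exact h0.mono_left (nhdsWithin_le_nhds (s := Set.Ioi (0:ℝ)))
    · filter_upwards [self_mem_nhdsWithin] with ρ hρ
      exact (mul_pos hω hρ).ne'
  have hρcast : Tendsto (fun ρ : ℝ => (ρ:ℂ)) (𝓝[>] (0:ℝ)) (𝓝 0) := by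
    have := (Complex.continuous_ofReal.tendsto 0).mono_left
      (nhdsWithin_le_nhds (s := Set.Ioi (0:ℝ)))
    simpa using this
  have hh : Tendsto (fun ρ : ℝ => (ρ:ℂ)^(n+1) * sphh n (ω*ρ)) (𝓝[>] (0:ℝ))
      (𝓝 (-Complex.I * cc n / (ω:ℂ)^(n+1))) := by
    have h2 := ((tendsto_h n).comp hmap).div_const ((ω:ℂ)^(n+1))
    apply h2.congr
    intro ρ
    simp only [Function.comp]
    push_cast [mul_pow]
    field_simp
  have hH : Tendsto (fun ρ : ℝ => (ρ:ℂ)^(n+1) * sphH n (ω*ρ)) (𝓝[>] (0:ℝ))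
      (𝓝 (Complex.I * n * cc n / (ω:ℂ)^(n+1))) := by
    have h2 := ((tendsto_H n hn).comp hmap).div_const ((ω:ℂ)^(n+1))
    apply h2.congr
    intro ρ
    simp only [Function.comp]
    push_cast [mul_pow]
    field_simp
  set X : ℂ := Complex.I * n * cc n / (ω:ℂ)^(n+1) with hX
  set L : ℂ := ((Real.sqrt μ₀ : ℝ):ℂ)⁻¹ * k * (-X) * ((sphj n (k*ω) : ℝ):ℂ) with hLdef
  have hXne : X ≠ 0 := by
    rw [hX]
    exact div_ne_zero (mul_ne_zero (mul_ne_zero Complex.I_ne_zero hnne) hccne)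
      (pow_ne_zero _ hωne)
  have hLne : L ≠ 0 := by
    rw [hLdef]
    exact mul_ne_zero (mul_ne_zero (mul_ne_zero (inv_ne_zero hsμc) hkne)
      (neg_ne_zero.mpr hXne)) hjne
  have hF : Tendsto (fun ρ : ℝ => (ρ:ℂ)^(n+1) * Dn' ε₀ μ₀ ω k n ρ) (𝓝[>] (0:ℝ)) (𝓝 L) := by
    have h1 := (hρcast.mul hh).const_mul
      (((Real.sqrt ε₀ : ℝ):ℂ)⁻¹ * ((sphJ n (k*ω) : ℝ):ℂ))
    have h2 := hH.const_mul (((Real.sqrt μ₀ : ℝ):ℂ)⁻¹ * k * ((sphj n (k*ω) : ℝ):ℂ))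
    have h3 := h1.sub h2
    have hval : ((Real.sqrt ε₀ : ℝ):ℂ)⁻¹ * ((sphJ n (k*ω) : ℝ):ℂ)
          * ((0:ℂ) * (-Complex.I * cc n / (ω:ℂ)^(n+1)))
        - ((Real.sqrt μ₀ : ℝ):ℂ)⁻¹ * k * ((sphj n (k*ω) : ℝ):ℂ)
          * (Complex.I * n * cc n / (ω:ℂ)^(n+1)) = L := by
      rw [hLdef, hX]; ring
    rw [hval] at h3
    apply h3.congr
    intro ρ
    simp only [Dn']
    push_cast
    ring
  have hev : ∀ᶠ ρ : ℝ in 𝓝[>] (0:ℝ), (ρ:ℂ)^(n+1) * Dn' ε₀ μ₀ ω k n ρ ≠ 0 :=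
    hF.eventually_ne hLne
  obtain ⟨u, hu, hsub⟩ := mem_nhdsGT_iff_exists_Ioo_subset.mp hev
  refine ⟨u, hu, ?_, ?_, ?_⟩
  · intro ρ h0 hu'
    exact right_ne_zero_of_mul (hsub ⟨h0, hu'⟩)
  · -- t3'
    have key := (tendsto_const_nhds
        (x := (↑(sphJ n (k * ω)) * sphh n (k * ω)
          - sphH n (k * ω) * ↑(sphj n (k * ω)) : ℂ))).div hF hLne
    have heq : ∀ ρ : ℝ, t3' ε₀ μ₀ ω k n ρ / (ρ:ℂ)^(n+1)
        = (↑(sphJ n (k * ω)) * sphh n (k * ω)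
            - sphH n (k * ω) * ↑(sphj n (k * ω)) : ℂ)
          / ((ρ:ℂ)^(n+1) * Dn' ε₀ μ₀ ω k n ρ) := by
      intro ρ
      rw [t3', div_div]
      ring
    have hΓ : Real.Gamma ((n:ℝ) + 1/2) = cc n * Real.sqrt Real.pi / 2^n := by
      rw [cc_eq_gamma]
      have hπ : Real.sqrt Real.pi ≠ 0 := (Real.sqrt_pos.mpr Real.pi_pos).ne'
      field_simp
    have hπc : ((Real.sqrt Real.pi : ℝ):ℂ) ≠ 0 :=
      Complex.ofReal_ne_zero.mpr (Real.sqrt_pos.mpr Real.pi_pos).ne'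
    have hval : (↑(sphJ n (k * ω)) * sphh n (k * ω)
          - sphH n (k * ω) * ↑(sphj n (k * ω)) : ℂ) / L
        = 2 * Complex.I * Real.sqrt Real.pi
          * (↑(sphJ n (k * ω)) * sphh n (k * ω) - sphH n (k * ω) * ↑(sphj n (k * ω)))
          / (Real.Gamma (n + 1 / 2) * (Real.sqrt μ₀)⁻¹ * k * n * sphj n (k * ω))
          * ((ω / 2 : ℝ) : ℂ) ^ (n + 1) := by
      rw [hLdef, hX, hΓ]
      push_cast
      exact div_identity1 n _ _ _ _ _ _ _ _ hsμc hkne hnne hccne hωne hjne hπc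
    rw [← hval]
    exact key.congr fun ρ => (heq ρ).symm
  · -- t4'
    have h1 := hH.const_mul
      (((Real.sqrt μ₀ : ℝ):ℂ)⁻¹ * k * sphh n (k*ω))
    have h2 := (hρcast.mul hh).const_mul
      (((Real.sqrt ε₀ : ℝ):ℂ)⁻¹ * sphH n (k*ω))
    have h3 := h1.sub h2
    have hval0 : ((Real.sqrt μ₀ : ℝ):ℂ)⁻¹ * k * sphh n (k*ω) * X
        - ((Real.sqrt ε₀ : ℝ):ℂ)⁻¹ * sphH n (k*ω)
          * ((0:ℂ) * (-Complex.I * cc n / (ω:ℂ)^(n+1)))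
        = ((Real.sqrt μ₀ : ℝ):ℂ)⁻¹ * k * sphh n (k*ω) * X := by ring
    rw [hX] at hval0
    rw [hval0] at h3
    have key := h3.div hF hLne
    have hval : ((Real.sqrt μ₀ : ℝ):ℂ)⁻¹ * k * sphh n (k*ω) * X / L
        = -(sphh n (k * ω) / ↑(sphj n (k * ω))) := by
      rw [hLdef]
      exact div_identity2 _ _ _ _ _ hsμc hkne hXne hjne
    rw [hval] at key
    apply key.congr'
    filter_upwards [self_mem_nhdsWithin] with ρ hρ
    have hρn : ((ρ:ℂ))^(n+1) ≠ 0 := pow_ne_zero _ (by exact_mod_cast (ne_of_gt hρ))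
    simp only [Pi.div_apply]
    rw [t4']
    rw [show (((Real.sqrt μ₀ : ℝ):ℂ)⁻¹ * k * sphh n (k*ω)
        * ((ρ:ℂ)^(n+1) * sphH n (ω*ρ))
      - ((Real.sqrt ε₀ : ℝ):ℂ)⁻¹ * sphH n (k*ω) * ((ρ:ℂ) * ((ρ:ℂ)^(n+1) * sphh n (ω*ρ))))
      = (ρ:ℂ)^(n+1) * ((Real.sqrt μ₀)⁻¹ * k * sphh n (k * ω) * sphH n (ω * ρ)
        - (Real.sqrt ε₀)⁻¹ * ρ * sphH n (k * ω) * sphh n (ω * ρ)) from by push_cast; ring]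
    rw [mul_div_mul_left _ _ hρn]
end

section
/- Fix ω > 0, an integer n ≥ 1, and ρ₁ ∈ (0,1). For ρ ∈ (0, ρ₁) set a_ρ = 2(1−ρ)/(2−ρ) and b_ρ = 1/(2−ρ), and define A_n(ρ) = ∫_ρ^{ρ₁} h_n(ω s)·(a_ρ + b_ρ s)²·s^{−1} ds. Then lim_{ρ→0⁺} ρ^{n+1}·A_n(ρ) = −i·(2n−1)!!/((n+1)·ω^{n+1}). -/
open Filter Topology
open scoped Nat

open MeasureTheory Polynomial

lemma df_step (m : ℕ) : (2*(m+1)-1)‼ = (2*m+1) * (2*m-1)‼ := by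
  cases m with
  | zero => rfl
  | succ k =>
    have h1 : 2*(k+1+1)-1 = (2*k+1)+2 := by omega
    have h2 : 2*(k+1)+1 = (2*k+1)+2 := by omega
    have h3 : 2*(k+1)-1 = 2*k+1 := by omega
    rw [h1, Nat.doubleFactorial_add_two, h2, h3]

lemma rayleigh_struct (F : ℕ → ℝ → ℝ)
    (hF : ∀ m t, F (m+1) t = deriv (F m) t / t)
    (p₀ q₀ : ℝ[X])
    (h0 : ∀ t : ℝ, t ≠ 0 → F 0 t = (p₀.eval t * Real.sin t + q₀.eval t * Real.cos t) / t) :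
    ∀ m : ℕ, ∃ p q : ℝ[X],
      p.eval 0 = (-1)^m * ((2*m-1)‼ : ℕ) * p₀.eval 0 ∧
      q.eval 0 = (-1)^m * ((2*m-1)‼ : ℕ) * q₀.eval 0 ∧
      ∀ t : ℝ, t ≠ 0 → F m t =
        (p.eval t * Real.sin t + q.eval t * Real.cos t) / t^(2*m+1) := by
  intro m
  induction m with
  | zero =>
    refine ⟨p₀, q₀, by norm_num, by norm_num, ?_⟩
    intro t ht; simpa using h0 t ht
  | succ m ih =>
    obtain ⟨p, q, hp0, hq0, heq⟩ := ih
    refine ⟨X * (p.derivative - q) - C (((2*m+1 : ℕ) : ℝ)) * p,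
           X * (q.derivative + p) - C (((2*m+1 : ℕ) : ℝ)) * q, ?_, ?_, ?_⟩
    · simp [hp0, df_step, pow_succ]
      push_cast
      ring
    · simp [hq0, df_step, pow_succ]
      push_cast
      ring
    · intro t ht
      have hev : F m =ᶠ[𝓝 t]
          (fun s => (p.eval s * Real.sin s + q.eval s * Real.cos s) / s^(2*m+1)) := by
        filter_upwards [eventually_ne_nhds ht] with s hs using heq s hs
      have hG : HasDerivAt (fun s => p.eval s * Real.sin s + q.eval s * Real.cos s)
          (p.derivative.eval t * Real.sin t + p.eval t * Real.cos t +
            (q.derivative.eval t * Real.cos t + q.eval t * (-Real.sin t))) t :=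
        ((p.hasDerivAt t).mul (Real.hasDerivAt_sin t)).add
          ((q.hasDerivAt t).mul (Real.hasDerivAt_cos t))
      have hH : HasDerivAt (fun s : ℝ => s^(2*m+1))
          (((2*m+1 : ℕ) : ℝ) * t^(2*m)) t := by
        simpa using hasDerivAt_pow (2*m+1) t
      have hdiv := hG.div hH (pow_ne_zero _ ht)
      have hder : deriv (F m) t = _ := hev.deriv_eq.trans hdiv.deriv
      rw [hF m t, hder]
      simp only [eval_sub, eval_mul, eval_X, eval_C, eval_add, Polynomial.eval_sub,
        Polynomial.eval_add]
      field_simp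
      ring


lemma int_inv_pow (k : ℕ) (a b : ℝ) (ha : 0 < a) (hab : a ≤ b) :
    ∫ s in a..b, ((s^(k+2))⁻¹ : ℝ) = ((a^(k+1))⁻¹ - (b^(k+1))⁻¹)/(k+1) := by
  have h0 : (0:ℝ) ∉ Set.uIcc a b := by
    rw [Set.uIcc_of_le hab]; rintro ⟨h1, h2⟩; linarith
  have h := integral_zpow (a := a) (b := b) (n := -((k+2:ℕ) : ℤ)) (Or.inr ⟨by omega, h0⟩)
  rw [show (-((k+2:ℕ):ℤ) + 1) = -((k+1:ℕ) : ℤ) by push_cast; ring] at h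
  simp only [zpow_neg, zpow_natCast] at h
  rw [show ((((-((k+2:ℕ):ℤ)) : ℤ) : ℝ) + 1) = -((k:ℝ)+1) by push_cast; ring] at h
  rw [h, div_neg]
  ring

lemma abstract_limit (n : ℕ) (ρ₁ : ℝ) (hρ₁ : 0 < ρ₁) (Ψ : ℝ → ℝ → ℂ) (L : ℂ)
    (hcont : ∀ ρ, Continuous (Ψ ρ))
    (M : ℝ) (hM0 : 0 ≤ M)
    (hM : ∀ ρ ∈ Set.Ioo (0:ℝ) ρ₁, ∀ s ∈ Set.Icc (0:ℝ) ρ₁, ‖Ψ ρ s‖ ≤ M)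
    (hlim : ∀ ε > 0, ∃ δ > 0, ∀ ρ s : ℝ, 0 < ρ → ρ < δ → 0 < s → s ≤ δ → ‖Ψ ρ s - L‖ ≤ ε) :
    Tendsto (fun ρ : ℝ => (ρ:ℂ)^(n+1) * ∫ s in ρ..ρ₁, Ψ ρ s / (s:ℂ)^(n+2))
      (𝓝[>] 0) (𝓝 (L / ((n:ℂ)+1))) := by
  have hn1 : (0:ℝ) < (n:ℝ) + 1 := by positivity
  have hci : ∀ (f : ℝ → ℂ), Continuous f → ∀ a b : ℝ, 0 < a → a ≤ b →
      IntervalIntegrable (fun s => f s / (s:ℂ)^(n+2)) volume a b := by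
    intro f hf a b ha hab
    apply ContinuousOn.intervalIntegrable
    apply ContinuousOn.div hf.continuousOn ((Complex.continuous_ofReal.pow _).continuousOn)
    intro s hs
    rw [Set.uIcc_of_le hab] at hs
    exact pow_ne_zero _ (Complex.ofReal_ne_zero.mpr (ne_of_gt (lt_of_lt_of_le ha hs.1)))
  rw [Metric.tendsto_nhds]
  intro ε hε
  obtain ⟨δ₀, hδ₀, hδ₀'⟩ := hlim (ε/4) (by positivity)
  set δ : ℝ := min (δ₀/2) ρ₁ with hδdef
  have hδpos : 0 < δ := lt_min (by positivity) hρ₁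
  have hδρ₁ : δ ≤ ρ₁ := min_le_right _ _
  have hδδ₀ : δ < δ₀ := lt_of_le_of_lt (min_le_left _ _) (by linarith)
  set K : ℝ := (M + ‖L‖) / δ^(n+2) * ρ₁ with hKdef
  have hKnn : 0 ≤ K := by positivity
  have ev1 : ∀ᶠ ρ in 𝓝[>] (0:ℝ), 0 < ρ := self_mem_nhdsWithin
  have ev2 : ∀ᶠ ρ in 𝓝[>] (0:ℝ), ρ < δ :=
    (eventually_lt_nhds hδpos).filter_mono nhdsWithin_le_nhds
  have tend3 : Tendsto (fun ρ : ℝ => ρ^(n+1) * K) (𝓝[>] (0:ℝ)) (𝓝 0) := by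
    have h := (((continuous_pow (n+1)).tendsto (0:ℝ)).mul
      (tendsto_const_nhds (x := K))).mono_left (nhdsWithin_le_nhds (s := Set.Ioi (0:ℝ)))
    simpa using h
  have ev3 : ∀ᶠ ρ in 𝓝[>] (0:ℝ), ρ^(n+1) * K < ε/4 :=
    tend3.eventually_lt_const (by positivity)
  have tend4 : Tendsto (fun ρ : ℝ => ‖L‖ * (ρ^(n+1) / ρ₁^(n+1)) / ((n:ℝ)+1))
      (𝓝[>] (0:ℝ)) (𝓝 0) := by
    have h := ((((continuous_pow (n+1)).tendsto (0:ℝ)).div_const (ρ₁^(n+1))).const_mul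
      ‖L‖).div_const ((n:ℝ)+1)
    simpa using h.mono_left (nhdsWithin_le_nhds (s := Set.Ioi (0:ℝ)))
  have ev4 : ∀ᶠ ρ in 𝓝[>] (0:ℝ),
      ‖L‖ * (ρ^(n+1) / ρ₁^(n+1)) / ((n:ℝ)+1) < ε/4 :=
    tend4.eventually_lt_const (by positivity)
  filter_upwards [ev1, ev2, ev3, ev4] with ρ hρ0 hρδ h3 h4
  have hρρ₁ : ρ ≤ ρ₁ := le_trans hρδ.le hδρ₁
  have hρn : (0:ℝ) < ρ^(n+1) := by positivity
  -- integrability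
  have I1 : IntervalIntegrable (fun s => (Ψ ρ s - L) / (s:ℂ)^(n+2)) volume ρ δ :=
    hci _ ((hcont ρ).sub continuous_const) ρ δ hρ0 hρδ.le
  have I2 : IntervalIntegrable (fun s => (Ψ ρ s - L) / (s:ℂ)^(n+2)) volume δ ρ₁ :=
    hci _ ((hcont ρ).sub continuous_const) δ ρ₁ hδpos hδρ₁
  have IL : IntervalIntegrable (fun s => L / (s:ℂ)^(n+2)) volume ρ ρ₁ :=
    hci _ continuous_const ρ ρ₁ hρ0 hρρ₁
  have Isub : IntervalIntegrable (fun s => (Ψ ρ s - L) / (s:ℂ)^(n+2)) volume ρ ρ₁ :=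
    hci _ ((hcont ρ).sub continuous_const) ρ ρ₁ hρ0 hρρ₁
  -- decomposition
  have hsplit : (∫ s in ρ..ρ₁, (Ψ ρ s - L) / (s:ℂ)^(n+2))
      = (∫ s in ρ..δ, (Ψ ρ s - L) / (s:ℂ)^(n+2))
        + ∫ s in δ..ρ₁, (Ψ ρ s - L) / (s:ℂ)^(n+2) :=
    (intervalIntegral.integral_add_adjacent_intervals I1 I2).symm
  have hint : (∫ s in ρ..ρ₁, Ψ ρ s / (s:ℂ)^(n+2))
      = (∫ s in ρ..ρ₁, (Ψ ρ s - L) / (s:ℂ)^(n+2)) + ∫ s in ρ..ρ₁, L / (s:ℂ)^(n+2) := by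
    rw [← intervalIntegral.integral_add Isub IL]
    congr 1; funext s
    rw [← add_div, sub_add_cancel]
  have key : (ρ:ℂ)^(n+1) * (∫ s in ρ..ρ₁, Ψ ρ s / (s:ℂ)^(n+2)) - L/((n:ℂ)+1)
      = (ρ:ℂ)^(n+1) * (∫ s in ρ..δ, (Ψ ρ s - L) / (s:ℂ)^(n+2))
        + (ρ:ℂ)^(n+1) * (∫ s in δ..ρ₁, (Ψ ρ s - L) / (s:ℂ)^(n+2))
        + ((ρ:ℂ)^(n+1) * (∫ s in ρ..ρ₁, L / (s:ℂ)^(n+2)) - L/((n:ℂ)+1)) := by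
    rw [hint, hsplit]; ring
  -- main term
  have hmain : (∫ s in ρ..ρ₁, L / (s:ℂ)^(n+2))
      = L * ((((ρ^(n+1))⁻¹ - (ρ₁^(n+1))⁻¹)/((n:ℝ)+1) : ℝ) : ℂ) := by
    have heq : ∀ s : ℝ, L / (s:ℂ)^(n+2) = L * ((((s^(n+2))⁻¹ : ℝ)) : ℂ) := by
      intro s; push_cast; ring
    simp_rw [heq]
    rw [intervalIntegral.integral_const_mul, intervalIntegral.integral_ofReal,
      int_inv_pow n ρ ρ₁ hρ0 hρρ₁]
  have hC : (ρ:ℂ)^(n+1) * (∫ s in ρ..ρ₁, L / (s:ℂ)^(n+2)) - L/((n:ℂ)+1)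
      = -(L * (((ρ^(n+1) / ρ₁^(n+1)) : ℝ) : ℂ) / ((n:ℂ)+1)) := by
    rw [hmain]
    have h1 : ((ρ:ℂ))^(n+1) ≠ 0 := pow_ne_zero _ (Complex.ofReal_ne_zero.mpr (ne_of_gt hρ0))
    have h2 : ((ρ₁:ℂ))^(n+1) ≠ 0 := pow_ne_zero _ (Complex.ofReal_ne_zero.mpr (ne_of_gt hρ₁))
    have h3 : ((n:ℂ)+1) ≠ 0 := Nat.cast_add_one_ne_zero n
    push_cast
    field_simp
    ring
  have hCnorm : ‖(ρ:ℂ)^(n+1) * (∫ s in ρ..ρ₁, L / (s:ℂ)^(n+2)) - L/((n:ℂ)+1)‖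
      = ‖L‖ * (ρ^(n+1) / ρ₁^(n+1)) / ((n:ℝ)+1) := by
    rw [hC, norm_neg, norm_div, norm_mul, Complex.norm_real,
      show ((n:ℂ)+1) = (((n:ℝ)+1 : ℝ) : ℂ) by push_cast; ring, Complex.norm_real,
      Real.norm_eq_abs, Real.norm_eq_abs,
      abs_of_nonneg (by positivity : (0:ℝ) ≤ ρ^(n+1)/ρ₁^(n+1)), abs_of_nonneg hn1.le]
  -- A term
  have hnorm_div : ∀ s : ℝ, 0 < s → ∀ z : ℂ, ‖z / (s:ℂ)^(n+2)‖ = ‖z‖ / s^(n+2) := by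
    intro s hs z
    rw [norm_div, norm_pow, Complex.norm_real, Real.norm_eq_abs, abs_of_pos hs]
  have hgI : IntervalIntegrable (fun s : ℝ => (ε/4) * (s^(n+2))⁻¹) volume ρ δ := by
    apply ContinuousOn.intervalIntegrable
    apply continuousOn_const.mul
    apply ContinuousOn.inv₀ (continuousOn_pow _)
    intro s hs
    rw [Set.uIcc_of_le hρδ.le] at hs
    exact pow_ne_zero _ (ne_of_gt (lt_of_lt_of_le hρ0 hs.1))
  have hAbound : ∀ᵐ s ∂(volume.restrict (Set.uIoc ρ δ)),
      ‖(Ψ ρ s - L) / (s:ℂ)^(n+2)‖ ≤ (ε/4) * (s^(n+2))⁻¹ := by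
    refine (ae_restrict_mem measurableSet_uIoc).mono fun s hs => ?_
    rw [Set.uIoc_of_le hρδ.le] at hs
    have hs0 : 0 < s := lt_trans hρ0 hs.1
    rw [hnorm_div s hs0]
    rw [div_eq_mul_inv]
    gcongr
    exact hδ₀' ρ s hρ0 (lt_trans hρδ hδδ₀) hs0 (le_trans hs.2 hδδ₀.le)
  have hA := intervalIntegral.norm_integral_le_abs_of_norm_le hAbound hgI
  have hgval : (∫ s in ρ..δ, (ε/4) * (s^(n+2))⁻¹)
      = (ε/4) * (((ρ^(n+1))⁻¹ - (δ^(n+1))⁻¹)/((n:ℝ)+1)) := by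
    rw [intervalIntegral.integral_const_mul, int_inv_pow n ρ δ hρ0 hρδ.le]
  have hnum : (0:ℝ) ≤ (ρ^(n+1))⁻¹ - (δ^(n+1))⁻¹ := by
    have : (δ^(n+1))⁻¹ ≤ (ρ^(n+1))⁻¹ := by
      apply inv_anti₀ hρn
      exact pow_le_pow_left₀ hρ0.le hρδ.le _
    linarith
  have hA2 : ‖∫ s in ρ..δ, (Ψ ρ s - L) / (s:ℂ)^(n+2)‖ ≤ (ε/4) * (ρ^(n+1))⁻¹ := by
    refine hA.trans ?_
    rw [hgval, abs_of_nonneg (by positivity)]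
    have step : ((ρ^(n+1))⁻¹ - (δ^(n+1))⁻¹)/((n:ℝ)+1) ≤ (ρ^(n+1))⁻¹ := by
      have h2 : (1:ℝ) ≤ (n:ℝ)+1 := by
        have := Nat.cast_nonneg (α := ℝ) n; linarith
      refine (div_le_self hnum h2).trans ?_
      have : (0:ℝ) < (δ^(n+1))⁻¹ := by positivity
      linarith
    gcongr
  -- B term
  have hB : ‖∫ s in δ..ρ₁, (Ψ ρ s - L) / (s:ℂ)^(n+2)‖ ≤ (M + ‖L‖)/δ^(n+2) * |ρ₁ - δ| := by
    apply intervalIntegral.norm_integral_le_of_norm_le_const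
    intro s hs
    rw [Set.uIoc_of_le hδρ₁] at hs
    have hs0 : 0 < s := lt_trans hδpos hs.1
    rw [hnorm_div s hs0]
    apply div_le_div₀ (by positivity)
    · refine (norm_sub_le _ _).trans ?_
      have := hM ρ ⟨hρ0, lt_of_lt_of_le hρδ hδρ₁⟩ s ⟨hs0.le, hs.2⟩
      linarith
    · positivity
    · exact pow_le_pow_left₀ hδpos.le hs.1.le _
  -- final assembly
  rw [dist_eq_norm, key]
  have hρnorm : ‖((ρ:ℂ))^(n+1)‖ = ρ^(n+1) := by
    rw [norm_pow, Complex.norm_real, Real.norm_eq_abs, abs_of_pos hρ0]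
  have tA : ‖(ρ:ℂ)^(n+1) * (∫ s in ρ..δ, (Ψ ρ s - L) / (s:ℂ)^(n+2))‖ ≤ ε/4 := by
    rw [norm_mul, hρnorm]
    calc ρ^(n+1) * ‖∫ s in ρ..δ, (Ψ ρ s - L) / (s:ℂ)^(n+2)‖
        ≤ ρ^(n+1) * ((ε/4) * (ρ^(n+1))⁻¹) := by gcongr
      _ = ε/4 := by field_simp
  have tB : ‖(ρ:ℂ)^(n+1) * (∫ s in δ..ρ₁, (Ψ ρ s - L) / (s:ℂ)^(n+2))‖ < ε/4 := by
    rw [norm_mul, hρnorm]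
    have hstep : (M + ‖L‖)/δ^(n+2) * |ρ₁ - δ| ≤ K := by
      rw [hKdef]
      apply mul_le_mul_of_nonneg_left _ (by positivity)
      rw [abs_of_nonneg (by linarith)]
      linarith
    calc ρ^(n+1) * ‖∫ s in δ..ρ₁, (Ψ ρ s - L) / (s:ℂ)^(n+2)‖
        ≤ ρ^(n+1) * ((M + ‖L‖)/δ^(n+2) * |ρ₁ - δ|) := by gcongr
      _ ≤ ρ^(n+1) * K := by
          apply mul_le_mul_of_nonneg_left hstep hρn.le
      _ < ε/4 := h3
  have tC : ‖(ρ:ℂ)^(n+1) * (∫ s in ρ..ρ₁, L / (s:ℂ)^(n+2)) - L/((n:ℂ)+1)‖ < ε/4 := by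
    rw [hCnorm]; exact h4
  calc ‖(ρ:ℂ)^(n+1) * (∫ s in ρ..δ, (Ψ ρ s - L) / (s:ℂ)^(n+2))
        + (ρ:ℂ)^(n+1) * (∫ s in δ..ρ₁, (Ψ ρ s - L) / (s:ℂ)^(n+2))
        + ((ρ:ℂ)^(n+1) * (∫ s in ρ..ρ₁, L / (s:ℂ)^(n+2)) - L/((n:ℂ)+1))‖
      ≤ ‖(ρ:ℂ)^(n+1) * (∫ s in ρ..δ, (Ψ ρ s - L) / (s:ℂ)^(n+2))‖
        + ‖(ρ:ℂ)^(n+1) * (∫ s in δ..ρ₁, (Ψ ρ s - L) / (s:ℂ)^(n+2))‖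
        + ‖(ρ:ℂ)^(n+1) * (∫ s in ρ..ρ₁, L / (s:ℂ)^(n+2)) - L/((n:ℂ)+1)‖ :=
        norm_add₃_le
    _ < ε := by linarith

lemma exists_phi (n : ℕ) : ∃ Φ : ℝ → ℂ, Continuous Φ ∧
    Φ 0 = -Complex.I * (((2*n-1)‼ : ℕ) : ℂ) ∧
    ∀ t : ℝ, t ≠ 0 → (t:ℂ)^(n+1) * sphh n t = Φ t := by
  obtain ⟨pf, qf, hpf0, hqf0, heqf⟩ := rayleigh_struct sphf (fun m t => rfl) 1 0
    (by intro t ht; simp [sphf]) n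
  obtain ⟨pg, qg, hpg0, hqg0, heqg⟩ := rayleigh_struct sphg (fun m t => rfl) 0 1
    (by intro t ht; simp [sphg]) n
  refine ⟨fun t => (-1:ℂ)^n *
      (((pf.eval t * Real.sin t + qf.eval t * Real.cos t : ℝ) : ℂ) -
        Complex.I * ((pg.eval t * Real.sin t + qg.eval t * Real.cos t : ℝ) : ℂ)),
    ?_, ?_, ?_⟩
  · refine continuous_const.mul (Continuous.sub ?_ (continuous_const.mul ?_)) <;>
    · exact Complex.continuous_ofReal.comp
        ((Polynomial.continuous _ |>.mul Real.continuous_sin).add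
          (Polynomial.continuous _ |>.mul Real.continuous_cos))
  · simp only [eval_one, eval_zero, mul_zero, mul_one] at hqf0 hpg0 hqg0
    simp [hqf0, hpg0, hqg0, Real.sin_zero, Real.cos_zero]
    have h1 : ((-1:ℂ))^n * ((-1:ℂ))^n = 1 := by rw [← mul_pow]; norm_num
    linear_combination Complex.I * (((2*n-1)‼ : ℕ) : ℂ) * h1
  · intro t ht
    have hf := heqf t ht
    have hg := heqg t ht
    simp only [sphh, sphj, sphy, hf, hg]
    have h2 : (t:ℂ) ≠ 0 := Complex.ofReal_ne_zero.mpr ht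
    push_cast
    field_simp
    ring


/-- With `a_ρ = 2(1-ρ)/(2-ρ)`, `b_ρ = 1/(2-ρ)` and
`A_n(ρ) = ∫_ρ^{ρ₁} h_n(ωs)(a_ρ + b_ρ s)² s⁻¹ ds`, one has
`lim_{ρ→0⁺} ρ^{n+1} A_n(ρ) = -i (2n-1)!!/((n+1) ω^{n+1})`. -/
theorem weighted_hankel_integral_limit (ω : ℝ) (hω : 0 < ω) (n : ℕ) (hn : 1 ≤ n)
    (ρ₁ : ℝ) (hρ₁ : 0 < ρ₁) (hρ₁' : ρ₁ < 1) :
    Tendsto (fun ρ : ℝ => (ρ : ℂ) ^ (n + 1) *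
        ∫ s in ρ..ρ₁, sphh n (ω * s) *
          (((2 * (1 - ρ) / (2 - ρ) + s / (2 - ρ)) ^ 2 / s : ℝ) : ℂ))
      (𝓝[>] 0)
      (𝓝 (-Complex.I * (((2 * n - 1)‼ : ℕ) : ℂ) / ((n + 1) * (ω : ℂ) ^ (n + 1)))) := by
  obtain ⟨Φ, hΦc, hΦ0, hΦeq⟩ := exists_phi n
  set L : ℂ := -Complex.I * (((2*n-1)‼ : ℕ) : ℂ) with hLdef
  set Ψ : ℝ → ℝ → ℂ := fun ρ s =>
    Φ (ω * s) * (((2*(1-ρ)/(2-ρ) + s/(2-ρ))^2 : ℝ) : ℂ) with hΨdef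
  have hcont : ∀ ρ, Continuous (Ψ ρ) := by
    intro ρ
    apply Continuous.mul (hΦc.comp (continuous_const.mul continuous_id))
    exact Complex.continuous_ofReal.comp (by fun_prop)
  obtain ⟨C, hC⟩ := (isCompact_Icc (a := (0:ℝ)) (b := ρ₁)).exists_bound_of_continuousOn
    ((hΦc.comp (continuous_const.mul continuous_id)).continuousOn)
  have hwb : ∀ ρ ∈ Set.Ioo (0:ℝ) ρ₁, ∀ s ∈ Set.Icc (0:ℝ) ρ₁,
      0 ≤ 2*(1-ρ)/(2-ρ) + s/(2-ρ) ∧ 2*(1-ρ)/(2-ρ) + s/(2-ρ) ≤ 3 := by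
    intro ρ hρ s hs
    have h1 : (0:ℝ) < 2 - ρ := by have := hρ.2; linarith
    constructor
    · have h2 : 0 ≤ 2*(1-ρ) := by have := hρ.2; linarith
      exact add_nonneg (div_nonneg h2 h1.le) (div_nonneg hs.1 h1.le)
    · rw [← add_div, div_le_iff₀ h1]
      have := hs.2; have := hρ.1; linarith
  have hM : ∀ ρ ∈ Set.Ioo (0:ℝ) ρ₁, ∀ s ∈ Set.Icc (0:ℝ) ρ₁,
      ‖Ψ ρ s‖ ≤ max C 0 * 9 := by
    intro ρ hρ s hs
    obtain ⟨hw0, hw3⟩ := hwb ρ hρ s hs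
    rw [hΨdef]
    simp only
    rw [norm_mul, Complex.norm_real, Real.norm_eq_abs, abs_of_nonneg (sq_nonneg _)]
    apply mul_le_mul ((hC s hs).trans (le_max_left _ _)) (by nlinarith) (sq_nonneg _)
      (le_max_right _ _)
  have hlim : ∀ ε > 0, ∃ δ > 0, ∀ ρ s : ℝ, 0 < ρ → ρ < δ → 0 < s → s ≤ δ →
      ‖Ψ ρ s - L‖ ≤ ε := by
    intro ε hε
    have hFc : ContinuousAt (fun p : ℝ × ℝ => Ψ p.1 p.2) (0,0) := by
      simp only [hΨdef]
      apply ContinuousAt.mul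
      · exact hΦc.continuousAt.comp (continuous_const.mul continuous_snd).continuousAt
      · apply Complex.continuous_ofReal.continuousAt.comp
        apply ContinuousAt.pow
        apply ContinuousAt.add
        · exact ContinuousAt.div (by fun_prop) (by fun_prop) (by norm_num)
        · exact ContinuousAt.div continuousAt_snd (by fun_prop) (by norm_num)
    have hΨ00 : Ψ 0 0 = L := by
      simp only [hΨdef]
      norm_num [hΦ0]
    have htd := hFc.tendsto
    rw [show Ψ (((0:ℝ),(0:ℝ)) : ℝ × ℝ).1 (((0:ℝ),(0:ℝ)) : ℝ × ℝ).2 = Ψ 0 0 from rfl, hΨ00,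
      Metric.tendsto_nhds_nhds] at htd
    obtain ⟨δm, hδm, hd⟩ := htd ε hε
    refine ⟨δm/2, by positivity, fun ρ s hρ0 hρδ hs0 hsδ => ?_⟩
    have hdist : dist ((ρ, s) : ℝ × ℝ) (0,0) < δm := by
      rw [Prod.dist_eq]
      apply max_lt
      · rw [Real.dist_eq, sub_zero, abs_of_pos hρ0]; linarith
      · rw [Real.dist_eq, sub_zero, abs_of_pos hs0]; linarith
    have h2 := hd hdist
    rw [dist_eq_norm] at h2
    exact le_of_lt (by simpa using h2)
  have main := abstract_limit n ρ₁ hρ₁ Ψ L hcont (max C 0 * 9)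
    (by positivity) hM hlim
  have main2 := main.const_mul (((ω:ℂ)^(n+1))⁻¹)
  have hcω : ((ω:ℂ)) ≠ 0 := Complex.ofReal_ne_zero.mpr hω.ne'
  have hn0 : ((n:ℂ)+1) ≠ 0 := Nat.cast_add_one_ne_zero n
  have hval : -Complex.I * (((2 * n - 1)‼ : ℕ) : ℂ) / ((n + 1) * (ω : ℂ) ^ (n + 1))
      = ((ω:ℂ)^(n+1))⁻¹ * (L / ((n:ℂ)+1)) := by
    rw [hLdef, inv_mul_eq_div, div_div]
  rw [hval]
  apply main2.congr'
  have ev1 : ∀ᶠ ρ in 𝓝[>] (0:ℝ), 0 < ρ := self_mem_nhdsWithin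
  have ev2 : ∀ᶠ ρ in 𝓝[>] (0:ℝ), ρ < ρ₁ :=
    (eventually_lt_nhds hρ₁).filter_mono nhdsWithin_le_nhds
  filter_upwards [ev1, ev2] with ρ hρ0 hρρ₁
  have hint : (∫ s in ρ..ρ₁, sphh n (ω * s) *
        (((2 * (1 - ρ) / (2 - ρ) + s / (2 - ρ)) ^ 2 / s : ℝ) : ℂ))
      = ((ω:ℂ)^(n+1))⁻¹ * ∫ s in ρ..ρ₁, Ψ ρ s / (s:ℂ)^(n+2) := by
    rw [← intervalIntegral.integral_const_mul]
    apply intervalIntegral.integral_congr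
    intro s hs
    rw [Set.uIcc_of_le hρρ₁.le] at hs
    have hs0 : 0 < s := lt_of_lt_of_le hρ0 hs.1
    have hωs : ω * s ≠ 0 := (mul_pos hω hs0).ne'
    have hh := hΦeq (ω * s) hωs
    have hcs : ((s:ℂ)) ≠ 0 := Complex.ofReal_ne_zero.mpr hs0.ne'
    have h2ρ : ((2:ℂ) - (ρ:ℂ)) ≠ 0 := by
      intro h
      have : (2:ℝ) - ρ = 0 := by exact_mod_cast h
      linarith
    rw [hΨdef]
    simp only
    rw [← hh, Complex.ofReal_div, Complex.ofReal_mul, mul_pow]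
    field_simp [hcs, hcω]
    ring
  rw [hint]
  ring
end
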